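/- arXiv:0812.1873 — 2 statements merged into one kernel-verified Lean document; each statement's English description precedes it below -/
import Mathlib

section
/- Let N ≥ 1, and for each 0 ≤ i ≤ N let F_i(X) = A_i + m_i X + Σ_{j=1}^{d_i} min(X, B_{i,j}) with A_i ∈ ℝ, m_i ∈ ℕ, d_i ∈ ℕ, B_{i,j} ∈ ℝ. Define V(X,Y) = min over 0 ≤ i ≤ N of (F_i(X) + (N−i)Y), the tropical plane curve Trop C = {(X,Y) ∈ ℝ² : V is not differentiable at (X,Y)}, and 𝔇_i = {(X,Y) : V(X,Y) = F_i(X) + (N−i)Y}. Assume that for every X ∈ ℝ and every 1 ≤ i ≤ N the slice {Y : (X,Y) ∈ 𝔇_i} is nonempty; then for 1 ≤ i ≤ N this slice has a minimum, defining 𝒩_i(X), and we formally set 𝒩₀ ≡ −∞ and 𝒩_{N+1} ≡ +∞. Let G_i = {(X, 𝒩_i(X)) : X ∈ ℝ} for 1 ≤ i ≤ N, and for each 0 ≤ i ≤ N and 1 ≤ j ≤ d_i let L_{i,j} = {B_{i,j}} × [𝒩_i(B_{i,j}), 𝒩_{i+1}(B_{i,j})] (interpreted as a half-line or line when an endpoint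 is ±∞). Then Trop C = (∪_{i=1}^{N} G_i) ∪ (∪_{i,j} L_{i,j}). -/
private lemma slope_eq {φ : ℝ → ℝ} (hφ : DifferentiableAt ℝ φ 0)
    {c₁ s₁ c₂ s₂ : ℝ} (h₁ : ∀ t, φ t ≤ c₁ + s₁ * t) (h₂ : ∀ t, φ t ≤ c₂ + s₂ * t)
    (e₁ : φ 0 = c₁) (e₂ : φ 0 = c₂) : s₁ = s₂ := by
  have key : ∀ c s : ℝ, (∀ t, φ t ≤ c + s * t) → φ 0 = c → deriv φ 0 = s := by
    intro c s h e
    have hd : HasDerivAt (fun t => c + s * t - φ t) (s - deriv φ 0) 0 := by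
      have h1 : HasDerivAt (fun t : ℝ => c + s * t) s 0 := by
        simpa using ((hasDerivAt_id (0:ℝ)).const_mul s).const_add c
      exact h1.sub hφ.hasDerivAt
    have hmin : IsLocalMin (fun t => c + s * t - φ t) 0 := by
      apply Filter.Eventually.of_forall
      intro t
      simp only [mul_zero, add_zero]
      have := h t
      linarith
    have h0 := hmin.deriv_eq_zero
    rw [hd.deriv] at h0
    linarith
  have k1 := key c₁ s₁ h₁ e₁
  have k2 := key c₂ s₂ h₂ e₂
  linarith

private lemma sum_ite_affine (s : Finset ℕ) (P : ℕ → Prop) [DecidablePred P] (X t : ℝ)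
    (b : ℕ → ℝ) :
    (∑ j ∈ s, if P j then X + t else b j)
    = (∑ j ∈ s, if P j then X else b j) + (s.filter P).card * t := by
  rw [Finset.sum_ite, Finset.sum_ite, Finset.sum_const, Finset.sum_const,
    nsmul_eq_mul, nsmul_eq_mul]
  ring




/-- Proposition 3.3 of the paper.  Let `F_i(X) = A_i + m_i X + Σ_j min(X, B_{i,j})`
for `0 ≤ i ≤ N`, let `V(X,Y) = min_i (F_i(X) + (N-i)Y)` and let the tropical plane
curve `Trop C` be the non-differentiability locus of `V`.  If every slice
`{Y : (X,Y) ∈ 𝔇_i}` (for `1 ≤ i ≤ N`) is nonempty, then each such slice has a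
minimum `𝒩_i(X)`, and `Trop C` equals the union of the graphs
`G_i = {Y = 𝒩_i(X)}` (`1 ≤ i ≤ N`) with the vertical segments
`L_{i,j} = {B_{i,j}} × [𝒩_i(B_{i,j}), 𝒩_{i+1}(B_{i,j})]` (`0 ≤ i ≤ N`,
`1 ≤ j ≤ d_i`), where formally `𝒩₀ ≡ -∞` and `𝒩_{N+1} ≡ +∞` (so that the
corresponding endpoint constraint is vacuous). -/
theorem tropical_curve_decomposition (N : ℕ) (hN : 1 ≤ N)
    (A : ℕ → ℝ) (m : ℕ → ℕ) (d : ℕ → ℕ) (B : ℕ → ℕ → ℝ)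
    (F : ℕ → ℝ → ℝ)
    (hF : ∀ i ≤ N, ∀ X : ℝ,
      F i X = A i + (m i : ℝ) * X + ∑ j ∈ Finset.range (d i), min X (B i j))
    (V : ℝ × ℝ → ℝ)
    (hV : ∀ p : ℝ × ℝ,
      IsLeast {r : ℝ | ∃ i ≤ N, r = F i p.1 + ((N : ℝ) - (i : ℕ)) * p.2} (V p))
    (hne : ∀ X : ℝ, ∀ i, 1 ≤ i → i ≤ N →
      ({Y : ℝ | V (X, Y) = F i X + ((N : ℝ) - (i : ℕ)) * Y}).Nonempty) :
    ∃ 𝒩 : ℕ → ℝ → ℝ,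
      (∀ X : ℝ, ∀ i, 1 ≤ i → i ≤ N →
        IsLeast {Y : ℝ | V (X, Y) = F i X + ((N : ℝ) - (i : ℕ)) * Y} (𝒩 i X)) ∧
      {p : ℝ × ℝ | ¬ DifferentiableAt ℝ V p} =
        (⋃ i ∈ Set.Icc 1 N, {p : ℝ × ℝ | p.2 = 𝒩 i p.1}) ∪
        (⋃ i ∈ Set.Iic N, ⋃ j ∈ Set.Iio (d i),
          {p : ℝ × ℝ | p.1 = B i j ∧ (1 ≤ i → 𝒩 i (B i j) ≤ p.2) ∧
            (i < N → p.2 ≤ 𝒩 (i + 1) (B i j))}) := by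
  -- basic facts
  have hVle : ∀ (p : ℝ × ℝ) (i : ℕ), i ≤ N → V p ≤ F i p.1 + ((N:ℝ) - i) * p.2 :=
    fun p i hi => (hV p).2 ⟨i, hi, rfl⟩
  have hVex : ∀ p : ℝ × ℝ, ∃ i ≤ N, V p = F i p.1 + ((N:ℝ) - i) * p.2 := fun p => (hV p).1
  -- active criterion
  have hact : ∀ (p : ℝ × ℝ) (i : ℕ), i ≤ N →
      (F i p.1 + ((N:ℝ) - i) * p.2 ≤ V p) → V p = F i p.1 + ((N:ℝ) - i) * p.2 :=
    fun p i hi h => le_antisymm (hVle p i hi) h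
  -- the slices
  set S : ℕ → ℝ → Set ℝ :=
    fun i X => {Y : ℝ | V (X, Y) = F i X + ((N : ℝ) - (i : ℕ)) * Y} with hS
  set 𝒩 : ℕ → ℝ → ℝ := fun i X => sInf (S i X) with h𝒩def
  have hleast : ∀ (X : ℝ) (i : ℕ), 1 ≤ i → i ≤ N → IsLeast (S i X) (𝒩 i X) := by
    intro X i hi1 hiN
    have hclosed : IsClosed (S i X) := by
      have : S i X = ⋂ k ∈ Finset.range (N+1),
          {Y : ℝ | F i X + ((N:ℝ) - i) * Y ≤ F k X + ((N:ℝ) - k) * Y} := by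
        ext Y
        simp only [Set.mem_iInter, Finset.mem_range, Nat.lt_succ_iff, hS, Set.mem_setOf_eq]
        constructor
        · intro h k hk
          rw [← h]; exact hVle (X, Y) k hk
        · intro h
          apply hact (X, Y) i hiN
          obtain ⟨k, hk, hVk⟩ := hVex (X, Y)
          rw [hVk]; exact h k hk
      rw [this]
      exact isClosed_biInter fun k _ => isClosed_le (by fun_prop) (by fun_prop)
    have hbdd : BddBelow (S i X) := by
      refine ⟨(F i X - F 0 X) / i, fun Y hY => ?_⟩
      have h0 : V (X, Y) ≤ F 0 X + ((N:ℝ) - (0:ℕ)) * Y := hVle (X, Y) 0 (Nat.zero_le N)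
      have hY' : V (X, Y) = F i X + ((N:ℝ) - i) * Y := hY
      have hi0 : (0:ℝ) < (i:ℝ) := by exact_mod_cast hi1
      rw [div_le_iff₀ hi0]
      push_cast at h0
      nlinarith [hY' ▸ h0]
    exact ⟨hclosed.csInf_mem (hne X i hi1 hiN) hbdd, fun Y hY => csInf_le hbdd hY⟩

  -- monotone lemma: smaller active index occurs at smaller Y
  have hML : ∀ (X Ya Yb : ℝ) (j k : ℕ), j < k → k ≤ N →
      V (X, Ya) = F j X + ((N:ℝ) - j) * Ya →
      V (X, Yb) = F k X + ((N:ℝ) - k) * Yb → Ya ≤ Yb := by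
    intro X Ya Yb j k hjk hkN ha hb
    by_contra hlt
    push_neg at hlt
    have h1 : F j X + ((N:ℝ) - j) * Ya ≤ F k X + ((N:ℝ) - k) * Ya := ha ▸ hVle (X, Ya) k hkN
    have h2 : F k X + ((N:ℝ) - k) * Yb ≤ F j X + ((N:ℝ) - j) * Yb :=
      hb ▸ hVle (X, Yb) j (le_trans (le_of_lt hjk) hkN)
    have hc : (j:ℝ) < (k:ℝ) := by exact_mod_cast hjk
    nlinarith
  -- membership of the minimum
  have hmem : ∀ (X : ℝ) (i : ℕ), 1 ≤ i → i ≤ N →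
      V (X, 𝒩 i X) = F i X + ((N:ℝ) - i) * (𝒩 i X) := fun X i h1 h2 => (hleast X i h1 h2).1
  -- at the minimum of slice i, some smaller index is active too
  have htouch : ∀ (X : ℝ) (i : ℕ), 1 ≤ i → i ≤ N →
      ∃ k < i, V (X, 𝒩 i X) = F k X + ((N:ℝ) - k) * (𝒩 i X) := by
    intro X i hi1 hiN
    set a := 𝒩 i X with hadef
    have hia := hmem X i hi1 hiN
    -- for every ε > 0 some k < i is active at a - ε
    have hstep : ∀ ε : ℝ, 0 < ε → ∃ k < i,
        V (X, a - ε) = F k X + ((N:ℝ) - k) * (a - ε) := by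
      intro ε hε
      obtain ⟨k, hkN, hk⟩ := hVex (X, a - ε)
      refine ⟨k, ?_, hk⟩
      rcases lt_trichotomy k i with h | h | h
      · exact h
      · exfalso
        subst h
        have : a ≤ a - ε := (hleast X k hi1 hiN).2 hk
        linarith
      · exfalso
        have := hML X a (a - ε) i k h hkN hia hk
        linarith
    -- the defect function
    set D : ℕ → ℝ := fun k => (F k X + ((N:ℝ) - k) * a) - (F i X + ((N:ℝ) - i) * a) with hD
    have hne' : (Finset.range i).Nonempty := ⟨0, Finset.mem_range.2 hi1⟩
    set μ := (Finset.range i).inf' hne' D with hμ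
    have hμ0 : μ ≤ 0 := by
      have key : ∀ ε : ℝ, 0 < ε → μ ≤ 0 + ε := by
        intro ε hε
        have hN0 : (0:ℝ) < (N:ℝ) := by exact_mod_cast hN
        obtain ⟨k, hki, hk⟩ := hstep (ε / N) (by positivity)
        have hle : F k X + ((N:ℝ) - k) * (a - ε/N) ≤ F i X + ((N:ℝ) - i) * (a - ε/N) :=
          hk ▸ hVle (X, a - ε/N) i hiN
        have h1 : μ ≤ D k := Finset.inf'_le D (Finset.mem_range.2 hki)
        have hkr : (k:ℝ) < (i:ℝ) := by exact_mod_cast hki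
        have hir : (i:ℝ) ≤ (N:ℝ) := by exact_mod_cast hiN
        have hk0 : (0:ℝ) ≤ (k:ℝ) := Nat.cast_nonneg k
        have hDk : D k ≤ (ε / N) * ((i:ℝ) - k) := by
          rw [hD]
          simp only
          nlinarith
        have : (ε / N) * ((i:ℝ) - k) ≤ ε := by
          rw [div_mul_eq_mul_div, div_le_iff₀ hN0]
          nlinarith
        have hfin : μ ≤ ε := le_trans h1 (le_trans hDk this)
        linarith
      linarith [le_of_forall_pos_le_add key]
    obtain ⟨k, hki, hkD⟩ := Finset.exists_mem_eq_inf' hne' D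
    refine ⟨k, Finset.mem_range.1 hki, ?_⟩
    apply hact (X, a) k (le_trans (le_of_lt (Finset.mem_range.1 hki)) hiN)
    have : D k ≤ 0 := by rw [← hkD]; exact hμ0
    rw [hD] at this
    simp only at this
    rw [hia]
    linarith

  -- key lemma: the interval constraints imply i is active
  have hkey : ∀ (X Y : ℝ) (i : ℕ), i ≤ N → (1 ≤ i → 𝒩 i X ≤ Y) → (i < N → Y ≤ 𝒩 (i+1) X) →
      V (X, Y) = F i X + ((N:ℝ) - i) * Y := by
    intro X Y i hiN hlb hub
    obtain ⟨k, hkN, hk⟩ := hVex (X, Y)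
    rcases lt_trichotomy k i with h | h | h
    · -- k < i, so i ≥ 1 and Y = 𝒩 i X
      have hi1 : 1 ≤ i := Nat.one_le_iff_ne_zero.2 (by omega)
      have hia := hmem X i hi1 hiN
      have hYle : Y ≤ 𝒩 i X := hML X Y (𝒩 i X) k i h hiN hk hia
      have : Y = 𝒩 i X := le_antisymm hYle (hlb hi1)
      rw [this]; exact hia
    · rw [← h]; exact hk
    · -- k > i, so i < N and Y = 𝒩 (i+1) X
      have hiN' : i < N := lt_of_lt_of_le h hkN
      have hi1' : 1 ≤ i + 1 := Nat.le_add_left 1 i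
      have hsN : i + 1 ≤ N := hiN'
      have hia := hmem X (i+1) hi1' hsN
      have hYa : Y = 𝒩 (i+1) X := by
        rcases Nat.lt_or_ge (i+1) k with hk' | hk'
        · exact le_antisymm (hub hiN') (hML X (𝒩 (i+1) X) Y (i+1) k hk' hkN hia hk)
        · have hki : k = i + 1 := by omega
          rw [hki] at hk
          exact le_antisymm (hub hiN') ((hleast X (i+1) hi1' hsN).2 hk)
      subst hYa
      -- some k' ≤ i is active at 𝒩 (i+1) X; upgrade to i
      obtain ⟨k', hk'lt, hk'⟩ := htouch X (i+1) hi1' hsN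
      have hk'i : k' ≤ i := by omega
      rcases eq_or_lt_of_le hk'i with he | hlt'
      · exact he ▸ hk'
      · have hi1 : 1 ≤ i := by omega
        have hib := hmem X i hi1 hiN
        have h1 : 𝒩 (i+1) X ≤ 𝒩 i X :=
          hML X (𝒩 (i+1) X) (𝒩 i X) k' i hlt' hiN hk' hib
        have h2 : 𝒩 i X ≤ 𝒩 (i+1) X :=
          hML X (𝒩 i X) (𝒩 (i+1) X) i (i+1) (Nat.lt_succ_self i) hsN hib hia
        have : 𝒩 (i+1) X = 𝒩 i X := le_antisymm h1 h2
        rw [this]; exact hib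
  -- if two indices are active at (X,Y) then Y = 𝒩 imax X
  have htop : ∀ (X Y : ℝ) (i i' : ℕ), i' < i → i ≤ N →
      V (X, Y) = F i X + ((N:ℝ) - i) * Y →
      V (X, Y) = F i' X + ((N:ℝ) - i') * Y → Y = 𝒩 i X := by
    intro X Y i i' hii hiN hi hi'
    have hi1 : 1 ≤ i := Nat.one_le_iff_ne_zero.2 (by omega)
    refine le_antisymm ?_ ((hleast X i hi1 hiN).2 hi)
    -- Y is a lower bound of S i X
    have : ∀ Y' ∈ S i X, Y ≤ Y' := fun Y' hY' => hML X Y Y' i' i hii hiN hi' hY'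
    exact this (𝒩 i X) (hmem X i hi1 hiN)

  -- non-differentiability when two indices are active
  have hndY : ∀ (X Y : ℝ) (i k : ℕ), k < i → i ≤ N →
      V (X, Y) = F i X + ((N:ℝ) - i) * Y → V (X, Y) = F k X + ((N:ℝ) - k) * Y →
      ¬ DifferentiableAt ℝ V (X, Y) := by
    intro X Y i k hki hiN hi hk hdiff
    have hφ : DifferentiableAt ℝ (fun t : ℝ => V (X, Y + t)) 0 := by
      have heq : (fun t : ℝ => V (X, Y + t)) = V ∘ (fun t : ℝ => (X, Y + t)) := rfl
      rw [heq]
      apply DifferentiableAt.comp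
      · show DifferentiableAt ℝ V (X, Y + 0)
        simpa using hdiff
      · exact DifferentiableAt.prodMk (differentiableAt_const X) ((differentiableAt_const Y).add differentiableAt_id)
    have hbd : ∀ (l : ℕ), l ≤ N → ∀ t : ℝ,
        V (X, Y + t) ≤ (F l X + ((N:ℝ) - l) * Y) + ((N:ℝ) - l) * t := by
      intro l hl t
      have h := hVle (X, Y + t) l hl
      simp only at h
      have : ((N:ℝ) - l) * (Y + t) = ((N:ℝ) - l) * Y + ((N:ℝ) - l) * t := mul_add _ _ _
      linarith
    have he : ∀ (l : ℕ), V (X, Y) = F l X + ((N:ℝ) - l) * Y →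
        (fun t : ℝ => V (X, Y + t)) 0 = F l X + ((N:ℝ) - l) * Y := by
      intro l hl
      show V (X, Y + 0) = _
      rw [add_zero]
      exact hl
    have := slope_eq hφ (hbd i hiN) (hbd k (le_trans hki.le hiN)) (he i hi) (he k hk)
    have : (i:ℝ) = (k:ℝ) := by linarith
    have : i = k := by exact_mod_cast this
    omega
  -- non-differentiability at a kink of F i when i is active
  have hndX : ∀ (X Y : ℝ) (i j : ℕ), i ≤ N → j < d i → X = B i j →
      V (X, Y) = F i X + ((N:ℝ) - i) * Y →
      ¬ DifferentiableAt ℝ V (X, Y) := by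
    intro X Y i j hiN hj hXB hi hdiff
    have hφ : DifferentiableAt ℝ (fun t : ℝ => V (X + t, Y)) 0 := by
      have heq : (fun t : ℝ => V (X + t, Y)) = V ∘ (fun t : ℝ => (X + t, Y)) := rfl
      rw [heq]
      apply DifferentiableAt.comp
      · show DifferentiableAt ℝ V (X + 0, Y)
        simpa using hdiff
      · exact DifferentiableAt.prodMk (((differentiableAt_const X).add differentiableAt_id)) (differentiableAt_const Y)
    -- two affine upper bounds along the X direction
    have hbd : ∀ (P : ℕ → Prop) (inst : DecidablePred P),
        (∀ j', P j' → ∀ t : ℝ, min (X + t) (B i j') ≤ X + t) →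
        (∀ j', ¬ P j' → ∀ t : ℝ, min (X + t) (B i j') ≤ B i j') →
        ∀ t : ℝ, V (X + t, Y) ≤
          (A i + (m i : ℝ) * X + (∑ j' ∈ Finset.range (d i), if P j' then X else B i j')
            + ((N:ℝ) - i) * Y)
          + ((m i : ℝ) + ((Finset.range (d i)).filter P).card) * t := by
      intro P inst hP hnP t
      have h := hVle (X + t, Y) i hiN
      simp only at h
      rw [hF i hiN (X + t)] at h
      have hsum : (∑ j' ∈ Finset.range (d i), min (X + t) (B i j'))
          ≤ ∑ j' ∈ Finset.range (d i), if P j' then X + t else B i j' := by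
        apply Finset.sum_le_sum
        intro j' _
        by_cases hPj : P j'
        · rw [if_pos hPj]; exact hP j' hPj t
        · rw [if_neg hPj]; exact hnP j' hPj t
      rw [sum_ite_affine] at hsum
      have hm : (m i : ℝ) * (X + t) = (m i : ℝ) * X + (m i : ℝ) * t := mul_add _ _ _
      have hc : ((m i : ℝ) + ((Finset.range (d i)).filter P).card) * t
          = (m i : ℝ) * t + ((Finset.range (d i)).filter P).card * t := add_mul _ _ _
      linarith
    have he : ∀ (P : ℕ → Prop) (inst : DecidablePred P),
        (∀ j', P j' → X ≤ B i j') → (∀ j', ¬ P j' → B i j' ≤ X) →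
        (fun t : ℝ => V (X + t, Y)) 0 =
          A i + (m i : ℝ) * X + (∑ j' ∈ Finset.range (d i), if P j' then X else B i j')
            + ((N:ℝ) - i) * Y := by
      intro P inst hP hnP
      show V (X + 0, Y) = _
      rw [add_zero, hi, hF i hiN X]
      congr 1
      congr 1
      apply Finset.sum_congr rfl
      intro j' _
      by_cases hPj : P j'
      · rw [if_pos hPj]; exact min_eq_left (hP j' hPj)
      · rw [if_neg hPj]; exact min_eq_right (hnP j' hPj)
    have h1 := hbd (fun j' => X ≤ B i j') (fun j' => Real.decidableLE X (B i j'))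
      (fun j' _ t => min_le_left _ _) (fun j' _ t => min_le_right _ _)
    have h2 := hbd (fun j' => X < B i j') (fun j' => Real.decidableLT X (B i j'))
      (fun j' _ t => min_le_left _ _) (fun j' _ t => min_le_right _ _)
    have e1 := he (fun j' => X ≤ B i j') (fun j' => Real.decidableLE X (B i j'))
      (fun j' h => h) (fun j' h => le_of_not_ge h)
    have e2 := he (fun j' => X < B i j') (fun j' => Real.decidableLT X (B i j'))
      (fun j' h => h.le) (fun j' h => not_lt.1 h)
    have hcard := slope_eq hφ h1 h2 e1 e2
    have hcard' : (((Finset.range (d i)).filter (fun j' => X ≤ B i j')).card : ℝ)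
        = ((Finset.range (d i)).filter (fun j' => X < B i j')).card := by linarith
    have hcardeq : ((Finset.range (d i)).filter (fun j' => X ≤ B i j')).card
        = ((Finset.range (d i)).filter (fun j' => X < B i j')).card := by exact_mod_cast hcard'
    have hss : (Finset.range (d i)).filter (fun j' => X < B i j')
        ⊂ (Finset.range (d i)).filter (fun j' => X ≤ B i j') := by
      rw [Finset.ssubset_def]
      constructor
      · intro x hx
        rw [Finset.mem_filter] at hx ⊢
        exact ⟨hx.1, hx.2.le⟩
      · intro hsub
        have hjmem : j ∈ (Finset.range (d i)).filter (fun j' => X ≤ B i j') := by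
          rw [Finset.mem_filter]
          exact ⟨Finset.mem_range.2 hj, le_of_eq hXB⟩
        have := hsub hjmem
        rw [Finset.mem_filter] at this
        exact absurd this.2 (by rw [hXB]; exact lt_irrefl _)
    have := Finset.card_lt_card hss
    omega

  -- differentiability when a single index is active and no kink
  have hdiffat : ∀ (X Y : ℝ) (k : ℕ), k ≤ N →
      V (X, Y) = F k X + ((N:ℝ) - k) * Y →
      (∀ l, l ≤ N → l ≠ k → V (X, Y) ≠ F l X + ((N:ℝ) - l) * Y) →
      (∀ j, j < d k → X ≠ B k j) →
      DifferentiableAt ℝ V (X, Y) := by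
    intro X Y k hkN hk huniq hB
    have hgcont : ∀ l, l ≤ N → Continuous (fun q : ℝ × ℝ => F l q.1 + ((N:ℝ) - l) * q.2) := by
      intro l hl
      have heq : (fun q : ℝ × ℝ => F l q.1 + ((N:ℝ) - l) * q.2)
          = fun q : ℝ × ℝ => (A l + (m l : ℝ) * q.1
            + ∑ j ∈ Finset.range (d l), min q.1 (B l j)) + ((N:ℝ) - l) * q.2 :=
        funext fun q => by rw [hF l hl q.1]
      rw [heq]
      exact (((continuous_const.add (continuous_const.mul continuous_fst)).add
        (continuous_finset_sum _ fun j _ => continuous_fst.min continuous_const)).add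
        (continuous_const.mul continuous_snd))
    have ev1 : ∀ᶠ q : ℝ × ℝ in nhds (X, Y), ∀ l ∈ Finset.range (N+1),
        l = k ∨ F k q.1 + ((N:ℝ) - k) * q.2 < F l q.1 + ((N:ℝ) - l) * q.2 := by
      rw [Filter.eventually_all_finset]
      intro l hl
      rcases eq_or_ne l k with h | h
      · exact Filter.Eventually.of_forall fun q => Or.inl h
      · have hlN : l ≤ N := Nat.lt_succ_iff.1 (Finset.mem_range.1 hl)
        have hstrict : F k X + ((N:ℝ) - k) * Y < F l X + ((N:ℝ) - l) * Y := by
          have h1 : V (X, Y) ≤ F l X + ((N:ℝ) - l) * Y := hVle (X, Y) l hlN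
          rw [hk] at h1
          rcases lt_or_eq_of_le h1 with h2 | h2
          · exact h2
          · exact absurd (hk.trans h2) (huniq l hlN h)
        have hev := (((hgcont k hkN).continuousAt
          (x := ((X : ℝ), (Y : ℝ)))).eventually_lt ((hgcont l hlN).continuousAt) hstrict)
        exact hev.mono fun q hq => Or.inr hq
    have ev2 : ∀ᶠ q : ℝ × ℝ in nhds (X, Y), ∀ j ∈ Finset.range (d k),
        min q.1 (B k j) = if X < B k j then q.1 else B k j := by
      rw [Filter.eventually_all_finset]
      intro j hj
      have hne' : X ≠ B k j := hB j (Finset.mem_range.1 hj)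
      rcases lt_or_gt_of_ne hne' with h | h
      · have hev : ∀ᶠ q : ℝ × ℝ in nhds (X, Y), q.1 < B k j :=
          (continuous_fst.continuousAt (x := ((X : ℝ), (Y : ℝ)))).eventually_lt
            continuousAt_const h
        exact hev.mono fun q hq => by rw [if_pos h, min_eq_left hq.le]
      · have hev : ∀ᶠ q : ℝ × ℝ in nhds (X, Y), B k j < q.1 :=
          (continuousAt_const (x := ((X : ℝ), (Y : ℝ)))).eventually_lt
            continuous_fst.continuousAt h
        exact hev.mono fun q hq => by rw [if_neg (not_lt.2 h.le), min_eq_right hq.le]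
    have evEq : V =ᶠ[nhds (X, Y)] fun q : ℝ × ℝ =>
        A k + (m k : ℝ) * q.1 + (∑ j ∈ Finset.range (d k), if X < B k j then q.1 else B k j)
          + ((N:ℝ) - k) * q.2 := by
      filter_upwards [ev1, ev2] with q hq1 hq2
      have hVq : V q = F k q.1 + ((N:ℝ) - k) * q.2 := by
        obtain ⟨l, hlN, hl⟩ := hVex q
        rcases hq1 l (Finset.mem_range.2 (Nat.lt_succ_of_le hlN)) with h | h
        · rw [h] at hl; exact hl
        · have := hVle q k hkN
          rw [← hl] at h
          linarith
      rw [hVq, hF k hkN q.1]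
      congr 1
      congr 1
      exact Finset.sum_congr rfl fun j hj => hq2 j hj
    refine (evEq.differentiableAt_iff).2 ?_
    apply DifferentiableAt.add
    apply DifferentiableAt.add
    apply DifferentiableAt.add
    · exact differentiableAt_const _
    · exact differentiableAt_fst.const_mul _
    · apply DifferentiableAt.fun_sum
      intro j _
      by_cases h : X < B k j
      · simp only [if_pos h]
        exact differentiableAt_fst
      · simp only [if_neg h]
        exact differentiableAt_const _
    · exact differentiableAt_snd.const_mul _

  refine ⟨𝒩, fun X i h1 h2 => hleast X i h1 h2, ?_⟩
  ext p
  obtain ⟨X, Y⟩ := p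
  simp only [Set.mem_setOf_eq, Set.mem_union, Set.mem_iUnion, Set.mem_Icc, Set.mem_Iic,
    Set.mem_Iio, exists_prop]
  constructor
  · intro hnd
    by_contra hR
    push_neg at hR
    obtain ⟨hG, hL⟩ := hR
    obtain ⟨k, hkN, hk⟩ := hVex (X, Y)
    apply hnd
    apply hdiffat X Y k hkN hk
    · intro l hlN hlk hl
      rcases Nat.lt_or_ge l k with h | h
      · exact hG k ⟨by omega, hkN⟩ (htop X Y k l h hkN hk hl)
      · have h' : k < l := lt_of_le_of_ne h (Ne.symm hlk)
        exact hG l ⟨by omega, hlN⟩ (htop X Y l k h' hlN hl hk)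
    · intro j hj hXB
      have h1 : 1 ≤ k → 𝒩 k (B k j) ≤ Y := fun h1 => hXB ▸ (hleast X k h1 hkN).2 hk
      obtain ⟨hkN', hgt⟩ := hL k hkN j hj hXB h1
      have hle : Y ≤ 𝒩 (k+1) X := hML X Y (𝒩 (k+1) X) k (k+1) (Nat.lt_succ_self k) hkN' hk
        (hmem X (k+1) (by omega) hkN')
      rw [← hXB] at hgt
      linarith
  · rintro (⟨i, ⟨hi1, hiN⟩, hY⟩ | ⟨i, hiN, j, hj, hXB, hlb, hub⟩)
    · obtain ⟨k, hki, hk⟩ := htouch X i hi1 hiN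
      rw [hY]
      exact hndY X (𝒩 i X) i k hki hiN (hmem X i hi1 hiN) hk
    · have hact_i : V (X, Y) = F i X + ((N:ℝ) - i) * Y := by
        apply hkey X Y i hiN
        · intro h1
          have := hlb h1
          rwa [← hXB] at this
        · intro h2
          have := hub h2
          rwa [← hXB] at this
      exact hndX X Y i j hiN hj hXB hact_i
end

section
/- For every r > 1 and every μ > 0 there exists μ₀ > 0 such that for all ε ∈ (0,1) and all α, β ∈ D(r), if the Euclidean distance in ℂⁿ between α and β is less than μ₀, then dist_(ε)(la(ε)(α), la(ε)(β)) < μ. -/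
/-- `l(ε)(x) = (-ε log|x₁|, …, -ε log|xₙ|)`. -/
noncomputable def lmap {n : ℕ} (ε : ℝ) (x : Fin n → ℂ) : Fin n → ℝ :=
  fun i => -ε * Real.log ‖x i‖

/-- `a(x) = (x₁/|x₁|, …, xₙ/|xₙ|)`. -/
noncomputable def amap {n : ℕ} (x : Fin n → ℂ) : Fin n → ℂ :=
  fun i => x i / (‖x i‖ : ℂ)

/-- Euclidean distance on `ℝⁿ`. -/
noncomputable def dEuc {n : ℕ} (x y : Fin n → ℝ) : ℝ :=
  Real.sqrt (∑ i, (x i - y i) ^ 2)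

/-- Distance on `Uⁿ` induced from `ℂⁿ`. -/
noncomputable def dU {n : ℕ} (u v : Fin n → ℂ) : ℝ :=
  Real.sqrt (∑ i, ‖u i - v i‖ ^ 2)

/-- `dist_(ε)((x,u),(y,v)) = ε⁻¹ d_{ℝⁿ}(x,y) + d_{Uⁿ}(u,v)`. -/
noncomputable def distEps {n : ℕ} (ε : ℝ)
    (p q : (Fin n → ℝ) × (Fin n → ℂ)) : ℝ :=
  ε⁻¹ * dEuc p.1 q.1 + dU p.2 q.2

lemma sqrt_sum_sq_le {n : ℕ} (f g : Fin n → ℝ) (c : ℝ) (hc : 0 ≤ c)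
    (h : ∀ i, |f i| ≤ c * g i) :
    Real.sqrt (∑ i, f i ^ 2) ≤ c * Real.sqrt (∑ i, g i ^ 2) := by
  have h1 : ∑ i, f i ^ 2 ≤ ∑ i, (c * g i) ^ 2 := by
    apply Finset.sum_le_sum
    intro i _
    have := h i
    nlinarith [abs_nonneg (f i), sq_abs (f i)]
  calc Real.sqrt (∑ i, f i ^ 2) ≤ Real.sqrt (∑ i, (c * g i) ^ 2) :=
        Real.sqrt_le_sqrt h1
    _ = Real.sqrt (c ^ 2 * ∑ i, g i ^ 2) := by
        rw [Finset.mul_sum]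
        congr 1
        exact Finset.sum_congr rfl fun i _ => by ring
    _ = c * Real.sqrt (∑ i, g i ^ 2) := by
        rw [Real.sqrt_mul (sq_nonneg c), Real.sqrt_sq hc]

lemma log_lip (r : ℝ) (hr : 1 < r) (a b : ℝ) (ha : 1 / r < a) (hb : 1 / r < b) :
    |Real.log a - Real.log b| ≤ r * |a - b| := by
  have hr0 : 0 < r := lt_trans one_pos hr
  wlog hab : b ≤ a generalizing a b
  · rw [abs_sub_comm, abs_sub_comm a b]
    exact this b a hb ha (le_of_not_ge hab)
  have hra : 0 < a := lt_trans (by positivity) ha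
  have hrb : 0 < b := lt_trans (by positivity) hb
  have key : Real.log a - Real.log b ≤ r * (a - b) := by
    rw [← Real.log_div (ne_of_gt hra) (ne_of_gt hrb)]
    have h1 : Real.log (a / b) ≤ a / b - 1 :=
      Real.log_le_sub_one_of_pos (by positivity)
    have h2 : a / b - 1 = (a - b) / b := by field_simp
    have h3 : (a - b) / b ≤ r * (a - b) := by
      rw [div_le_iff₀ hrb]
      have h4 : 1 ≤ r * b := by
        rw [div_lt_iff₀ hr0] at hb
        nlinarith
      nlinarith [sub_nonneg.mpr hab]
    linarith
  have hl : Real.log b ≤ Real.log a := Real.log_le_log hrb hab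
  rw [abs_of_nonneg (sub_nonneg.mpr hl), abs_of_nonneg (sub_nonneg.mpr hab)]
  exact key

lemma circle_lip (r : ℝ) (hr : 1 < r) (a b : ℂ)
    (ha : 1 / r < ‖a‖) (hb : 1 / r < ‖b‖) :
    ‖a / (‖a‖ : ℂ) - b / (‖b‖ : ℂ)‖
      ≤ 2 * r * ‖a - b‖ := by
  have hr0 : 0 < r := lt_trans one_pos hr
  have ha0 : 0 < ‖a‖ := lt_trans (by positivity) ha
  have hb0 : 0 < ‖b‖ := lt_trans (by positivity) hb
  have hA : ((‖a‖ : ℂ)) ≠ 0 := by simpa using ha0.ne'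
  have hB : ((‖b‖ : ℂ)) ≠ 0 := by simpa using hb0.ne'
  have hsplit : a / (‖a‖ : ℂ) - b / (‖b‖ : ℂ)
      = (a - b) / (‖a‖ : ℂ)
        + (b / (‖a‖ : ℂ) - b / (‖b‖ : ℂ)) := by ring
  have h2 : ‖b / (‖a‖ : ℂ) - b / (‖b‖ : ℂ)‖
      = |‖b‖ - ‖a‖| / ‖a‖ := by
    rw [div_sub_div _ _ hA hB, norm_div]
    have hnum : b * (‖b‖ : ℂ) - (‖a‖ : ℂ) * b
        = b * ((‖b‖ : ℂ) - (‖a‖ : ℂ)) := by ring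
    rw [hnum, norm_mul, norm_mul]
    have habs : ‖(‖b‖ : ℂ) - (‖a‖ : ℂ)‖
        = |‖b‖ - ‖a‖| := by
      rw [← Complex.ofReal_sub, Complex.norm_real, Real.norm_eq_abs]
    rw [habs]
    simp only [Complex.norm_real, Real.norm_eq_abs, abs_of_pos ha0, abs_of_pos hb0]
    field_simp
  have hbd : |‖b‖ - ‖a‖| ≤ ‖a - b‖ := by
    rw [abs_sub_comm]
    simpa using abs_norm_sub_norm_le a b
  have hinv : 1 / ‖a‖ < r := by
    rw [div_lt_iff₀ ha0]
    rw [div_lt_iff₀ hr0] at ha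
    nlinarith
  calc ‖a / (‖a‖ : ℂ) - b / (‖b‖ : ℂ)‖
      ≤ ‖(a - b) / (‖a‖ : ℂ)‖
        + ‖b / (‖a‖ : ℂ) - b / (‖b‖ : ℂ)‖ := by
        rw [hsplit]; exact norm_add_le _ _
    _ ≤ ‖a - b‖ / ‖a‖
        + ‖a - b‖ / ‖a‖ := by
        rw [h2, norm_div]
        simp only [Complex.norm_real, Real.norm_eq_abs, abs_of_pos ha0]
        gcongr
    _ = 2 * (‖a - b‖ * (1 / ‖a‖)) := by ring
    _ ≤ 2 * r * ‖a - b‖ := by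
        nlinarith [norm_nonneg (a - b), hinv]

/-- The key metric estimate in the approximation theorem at the origin: for
every `r > 1` and `μ > 0` there is `μ₀ > 0` such that for all `ε ∈ (0,1)` and
all `α, β ∈ D(r) = {x : 1/r < |xᵢ| < r}`, if the Euclidean distance in `ℂⁿ`
between `α` and `β` is less than `μ₀`, then
`dist_(ε)(la(ε)(α), la(ε)(β)) < μ`. -/
theorem metric_estimate_for_approximation (n : ℕ) (r : ℝ) (hr : 1 < r)
    (μ : ℝ) (hμ : 0 < μ) :
    ∃ μ₀ > (0 : ℝ), ∀ ε ∈ Set.Ioo (0 : ℝ) 1, ∀ α β : Fin n → ℂ,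
      (∀ i, 1 / r < ‖α i‖ ∧ ‖α i‖ < r) →
      (∀ i, 1 / r < ‖β i‖ ∧ ‖β i‖ < r) →
      Real.sqrt (∑ i, ‖α i - β i‖ ^ 2) < μ₀ →
      distEps ε (lmap ε α, amap α) (lmap ε β, amap β) < μ := by
  have hr0 : 0 < r := lt_trans one_pos hr
  refine ⟨μ / (3 * r), by positivity, ?_⟩
  rintro ε ⟨hε0, hε1⟩ α β hα hβ hd
  set d := Real.sqrt (∑ i, ‖α i - β i‖ ^ 2) with hddef
  have hd0 : 0 ≤ d := Real.sqrt_nonneg _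
  -- log part
  have hlog : dEuc (lmap ε α) (lmap ε β) ≤ ε * r * d := by
    apply sqrt_sum_sq_le _ _ (ε * r) (by positivity)
    intro i
    have h0 : lmap ε α i - lmap ε β i
        = ε * (Real.log (‖β i‖) - Real.log (‖α i‖)) := by
      simp only [lmap]; ring
    have h1 : |lmap ε α i - lmap ε β i|
        = ε * |Real.log (‖α i‖) - Real.log (‖β i‖)| := by
      rw [h0, abs_mul, abs_of_pos hε0, abs_sub_comm]
    rw [h1]
    have h2 := log_lip r hr _ _ (hα i).1 (hβ i).1
    have h3 : |‖α i‖ - ‖β i‖| ≤ ‖α i - β i‖ :=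
      abs_norm_sub_norm_le _ _
    calc ε * |Real.log (‖α i‖) - Real.log (‖β i‖)|
        ≤ ε * (r * ‖α i - β i‖) := by
          apply mul_le_mul_of_nonneg_left _ hε0.le
          exact h2.trans (by nlinarith)
      _ = ε * r * ‖α i - β i‖ := by ring
  -- circle part
  have hcirc : dU (amap α) (amap β) ≤ 2 * r * d := by
    apply sqrt_sum_sq_le _ _ (2 * r) (by positivity)
    intro i
    rw [abs_of_nonneg (norm_nonneg _)]
    exact circle_lip r hr _ _ (hα i).1 (hβ i).1
  have hεinv : ε⁻¹ * dEuc (lmap ε α) (lmap ε β) ≤ r * d := by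
    have := mul_le_mul_of_nonneg_left hlog (inv_nonneg.mpr hε0.le)
    calc ε⁻¹ * dEuc (lmap ε α) (lmap ε β) ≤ ε⁻¹ * (ε * r * d) := this
      _ = r * d := by field_simp
  have : distEps ε (lmap ε α, amap α) (lmap ε β, amap β) ≤ 3 * r * d := by
    simp only [distEps]
    calc ε⁻¹ * dEuc (lmap ε α) (lmap ε β) + dU (amap α) (amap β)
        ≤ r * d + 2 * r * d := add_le_add hεinv hcirc
      _ = 3 * r * d := by ring
  have hlt : 3 * r * d < μ := by
    have h := (lt_div_iff₀ (by positivity : (0:ℝ) < 3 * r)).mp hd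
    nlinarith
  linarith
end
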